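/- arXiv:2512.18515 — 2 statements merged into one kernel-verified Lean document; each statement's English description precedes it below -/
import Mathlib

section
/- (Planar invariance) Let a, b : [0,∞) → ℝ be continuous with a(t) ≤ 0 and b(t) ≤ 0 for all t, and let x solve x' = (a(t)-b(t))·x² + 2b(t)·x - b(t) with x(0) ∈ [0,1]. Then x(t) ∈ [0,1] for all t ≥ 0. -/
open Set

/-- Barrier lemma: if `f 0 ≤ 0` and `f' s ≤ K * c` whenever `f s = c ∈ (0,1]`,
then `f T ≤ 0`. -/
lemma barrier_aux (f f' : ℝ → ℝ) (T K : ℝ) (hT : 0 ≤ T) (hK : 0 ≤ K)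
    (hf : ∀ s ∈ Set.Icc (0:ℝ) T, HasDerivAt f (f' s) s)
    (hf0 : f 0 ≤ 0)
    (hbound : ∀ s ∈ Set.Ico (0:ℝ) T, ∀ c : ℝ, 0 < c → c ≤ 1 → f s = c → f' s ≤ K * c) :
    f T ≤ 0 := by
  have key : ∀ ε : ℝ, 0 < ε → ε ≤ Real.exp (-((K+1)*T)) →
      f T ≤ ε * Real.exp ((K+1)*T) := by
    intro ε hε hε1
    set B : ℝ → ℝ := fun s => ε * Real.exp ((K+1)*s) with hB
    have hB' : ∀ s : ℝ, HasDerivAt B ((K+1) * (ε * Real.exp ((K+1)*s))) s := by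
      intro s
      have h1 : HasDerivAt (fun s : ℝ => (K+1)*s) (K+1) s := by
        simpa using (hasDerivAt_id s).const_mul (K+1)
      have := (h1.exp).const_mul ε
      rw [show (K+1) * (ε * Real.exp ((K+1)*s)) = ε * (Real.exp ((K+1)*s) * (K+1)) by ring]
      exact this
    have hcont : ContinuousOn f (Set.Icc 0 T) := fun s hs =>
      (hf s hs).continuousAt.continuousWithinAt
    have main := image_le_of_deriv_right_lt_deriv_boundary (f := f) (f' := f')
      (B := B) (B' := fun s => (K+1) * (ε * Real.exp ((K+1)*s)))
      hcont
      (fun s hs => (hf s ⟨hs.1, le_of_lt hs.2⟩).hasDerivWithinAt)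
      (by
        have : (0:ℝ) < B 0 := by
          simp only [hB, mul_zero, Real.exp_zero, mul_one]; exact hε
        linarith)
      hB'
      (by
        intro s hs hfs
        have hc : (0:ℝ) < B s := mul_pos hε (Real.exp_pos _)
        have hc1 : B s ≤ 1 := by
          have h1 : Real.exp ((K+1)*s) ≤ Real.exp ((K+1)*T) := by
            apply Real.exp_le_exp.2
            have : 0 ≤ K + 1 := by linarith
            nlinarith [hs.2.le, hs.1]
          calc B s = ε * Real.exp ((K+1)*s) := rfl
            _ ≤ Real.exp (-((K+1)*T)) * Real.exp ((K+1)*T) :=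
                mul_le_mul hε1 h1 (Real.exp_pos _).le (Real.exp_pos _).le
            _ = 1 := by rw [← Real.exp_add]; simp
        have := hbound s hs (B s) hc hc1 hfs
        calc f' s ≤ K * B s := this
          _ < (K+1) * B s := by nlinarith
          _ = (K+1) * (ε * Real.exp ((K+1)*s)) := rfl)
    exact main ⟨hT, le_refl T⟩
  by_contra h
  push_neg at h
  set ε₀ := Real.exp (-((K+1)*T)) with hε₀
  have hε₀pos : 0 < ε₀ := Real.exp_pos _
  set δ := f T with hδ
  have hδpos : 0 < δ := h
  set ε := min ε₀ (δ / 2 * Real.exp (-((K+1)*T))) with hε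
  have hεpos : 0 < ε := lt_min hε₀pos (by positivity)
  have := key ε hεpos (min_le_left _ _)
  have h2 : ε * Real.exp ((K+1)*T) ≤ δ / 2 := by
    have : ε ≤ δ / 2 * Real.exp (-((K+1)*T)) := min_le_right _ _
    calc ε * Real.exp ((K+1)*T) ≤ (δ / 2 * Real.exp (-((K+1)*T))) * Real.exp ((K+1)*T) :=
          mul_le_mul_of_nonneg_right this (Real.exp_pos _).le
      _ = δ / 2 * (Real.exp (-((K+1)*T)) * Real.exp ((K+1)*T)) := by ring
      _ = δ / 2 := by rw [← Real.exp_add]; simp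
  linarith

theorem planar_invariance (a b x : ℝ → ℝ)
    (hac : Continuous a) (hbc : Continuous b)
    (ha : ∀ t, 0 ≤ t → a t ≤ 0) (hb : ∀ t, 0 ≤ t → b t ≤ 0)
    (hx : ∀ t, 0 ≤ t → HasDerivAt x
      ((a t - b t) * x t ^ 2 + 2 * b t * x t - b t) t)
    (hx0 : 0 ≤ x 0) (hx1 : x 0 ≤ 1) :
    ∀ t, 0 ≤ t → 0 ≤ x t ∧ x t ≤ 1 := by
  intro t ht
  -- bounds on a, b on [0, t]
  obtain ⟨Ca, hCa⟩ := (isCompact_Icc (a := (0:ℝ)) (b := t)).exists_bound_of_continuousOn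
    hac.continuousOn
  obtain ⟨Cb, hCb⟩ := (isCompact_Icc (a := (0:ℝ)) (b := t)).exists_bound_of_continuousOn
    hbc.continuousOn
  set Ka := max Ca 0 with hKa
  set Kb := max Cb 0 with hKb
  have hKa0 : 0 ≤ Ka := le_max_right _ _
  have hKb0 : 0 ≤ Kb := le_max_right _ _
  have hKaB : ∀ s ∈ Set.Icc (0:ℝ) t, -a s ≤ Ka := by
    intro s hs
    have := hCa s hs
    have h1 : -a s ≤ |a s| := neg_le_abs _
    exact h1.trans ((le_trans (le_of_eq (Real.norm_eq_abs _).symm) (this)).trans (le_max_left _ _))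
  have hKbB : ∀ s ∈ Set.Icc (0:ℝ) t, -b s ≤ Kb := by
    intro s hs
    have := hCb s hs
    have h1 : -b s ≤ |b s| := neg_le_abs _
    exact h1.trans ((le_trans (le_of_eq (Real.norm_eq_abs _).symm) (this)).trans (le_max_left _ _))
  constructor
  · -- lower bound: apply barrier to f = -x
    have := barrier_aux (fun s => -x s)
      (fun s => -((a s - b s) * x s ^ 2 + 2 * b s * x s - b s)) t Ka ht hKa0
      (fun s hs => (hx s hs.1).neg)
      (by simpa using hx0)
      (by
        intro s hs c hc hc1 hfs
        have hxs : x s = -c := by linarith [neg_eq_iff_eq_neg.mp hfs]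
        have has : a s ≤ 0 := ha s hs.1
        have hbs : b s ≤ 0 := hb s hs.1
        have hKas : -a s ≤ Ka := hKaB s ⟨hs.1, hs.2.le⟩
        show -((a s - b s) * x s ^ 2 + 2 * b s * x s - b s) ≤ Ka * c
        rw [hxs]
        have hint1 : b s * (1+c)^2 ≤ 0 := mul_nonpos_of_nonpos_of_nonneg hbs (sq_nonneg _)
        have hint2 : (-a s) * c^2 ≤ Ka * c^2 :=
          mul_le_mul_of_nonneg_right hKas (sq_nonneg _)
        have hint3 : Ka * c^2 ≤ Ka * c := by nlinarith [mul_nonneg (mul_nonneg hKa0 hc.le) (by linarith : (0:ℝ) ≤ 1 - c)]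
        nlinarith)
    simpa using this
  · -- upper bound: apply barrier to f = x - 1
    have := barrier_aux (fun s => x s - 1)
      (fun s => (a s - b s) * x s ^ 2 + 2 * b s * x s - b s) t Kb ht hKb0
      (fun s hs => (hx s hs.1).sub_const 1)
      (by show x 0 - 1 ≤ 0; linarith)
      (by
        intro s hs c hc hc1 hfs
        have hxs : x s = 1 + c := by linarith
        have has : a s ≤ 0 := ha s hs.1
        have hbs : b s ≤ 0 := hb s hs.1
        have hKbs : -b s ≤ Kb := hKbB s ⟨hs.1, hs.2.le⟩
        show (a s - b s) * x s ^ 2 + 2 * b s * x s - b s ≤ Kb * c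
        rw [hxs]
        have hint1 : a s * (1+c)^2 ≤ 0 := mul_nonpos_of_nonpos_of_nonneg has (sq_nonneg _)
        have hint2 : (-b s) * c^2 ≤ Kb * c^2 :=
          mul_le_mul_of_nonneg_right hKbs (sq_nonneg _)
        have hint3 : Kb * c^2 ≤ Kb * c := by nlinarith [mul_nonneg (mul_nonneg hKb0 hc.le) (by linarith : (0:ℝ) ≤ 1 - c)]
        nlinarith)
    have h2 : x t - 1 ≤ 0 := this
    linarith
end

section
/- (Exponential growth rate) If α·β > 0 and z(t) = exp(t·S)·z₀ with S = [[0,-β],[-α,0]] and z₀ not in the stable eigenspace (i.e. the component of z₀ along the eigenvector with eigenvalue √(αβ) is nonzero), then (1/t)·log‖z(t)‖ → √(αβ) as t → ∞. -/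
open scoped Matrix
open Matrix Filter

private lemma pow_mulVec_eigen (n : ℕ) (A : Matrix (Fin 2) (Fin 2) ℝ) (v : Fin 2 → ℝ) (lam : ℝ)
    (h : A.mulVec v = lam • v) : (A ^ n).mulVec v = (lam ^ n) • v := by
  induction n with
  | zero => simp
  | succ n ih =>
    rw [pow_succ, ← Matrix.mulVec_mulVec, h, Matrix.mulVec_smul, ih, smul_smul, ← pow_succ']

private lemma exp_mulVec_eigen (A : Matrix (Fin 2) (Fin 2) ℝ) (v : Fin 2 → ℝ) (lam : ℝ)
    (h : A.mulVec v = lam • v) :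
    (NormedSpace.exp A).mulVec v = Real.exp lam • v := by
  letI : SeminormedRing (Matrix (Fin 2) (Fin 2) ℝ) := Matrix.linftyOpSemiNormedRing
  letI : NormedRing (Matrix (Fin 2) (Fin 2) ℝ) := Matrix.linftyOpNormedRing
  letI : NormedAlgebra ℝ (Matrix (Fin 2) (Fin 2) ℝ) := Matrix.linftyOpNormedAlgebra
  let Llin : Matrix (Fin 2) (Fin 2) ℝ →ₗ[ℝ] (Fin 2 → ℝ) :=
    { toFun := fun M => M.mulVec v
      map_add' := fun M N => Matrix.add_mulVec M N v
      map_smul' := fun c M => by simp [Matrix.smul_mulVec] }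
  let L : Matrix (Fin 2) (Fin 2) ℝ →L[ℝ] (Fin 2 → ℝ) := Llin.toContinuousLinearMap
  have hsum : Summable fun n : ℕ => (n.factorial : ℝ)⁻¹ • A ^ n :=
    NormedSpace.expSeries_summable' (𝕂 := ℝ) A
  have h1 : (NormedSpace.exp A).mulVec v = ∑' n : ℕ, (n.factorial : ℝ)⁻¹ • (A ^ n).mulVec v := by
    rw [NormedSpace.exp_eq_tsum ℝ]
    have := L.map_tsum hsum
    simpa [L, Llin, Matrix.smul_mulVec] using this
  rw [h1]
  have h2 : ∀ n : ℕ, (n.factorial : ℝ)⁻¹ • (A ^ n).mulVec v = ((n.factorial : ℝ)⁻¹ * lam ^ n) • v := by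
    intro n; rw [pow_mulVec_eigen n A v lam h, smul_smul]
  simp_rw [h2]
  rw [Summable.tsum_smul_const]
  · congr 1
    rw [Real.exp_eq_exp_ℝ, NormedSpace.exp_eq_tsum ℝ]; simp [smul_eq_mul]
  · exact (Real.summable_pow_div_factorial lam).congr (fun n => by rw [div_eq_inv_mul])

theorem lanchester_growth_rate (α β : ℝ) (hα : 0 < α) (hβ : 0 < β)
    (κ : ℝ) (hκ : κ = Real.sqrt (α * β))
    (S : Matrix (Fin 2) (Fin 2) ℝ) (hS : S = !![0, -β; -α, 0])
    (z₀ : Fin 2 → ℝ) (cplus cminus : ℝ)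
    (hdecomp : z₀ = cplus • ![Real.sqrt β, -Real.sqrt α] +
      cminus • ![Real.sqrt β, Real.sqrt α])
    (hcplus : cplus ≠ 0)
    (z : ℝ → Fin 2 → ℝ)
    (hz : ∀ t, z t = (NormedSpace.exp (t • S)).mulVec z₀) :
    Filter.Tendsto (fun t => Real.log ‖z t‖ / t) Filter.atTop (nhds κ) := by
  have hκ0 : 0 < κ := by
    rw [hκ]; exact Real.sqrt_pos.mpr (mul_pos hα hβ)
  set vp : Fin 2 → ℝ := ![Real.sqrt β, -Real.sqrt α] with hvp
  set vm : Fin 2 → ℝ := ![Real.sqrt β, Real.sqrt α] with hvm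
  have hsab : Real.sqrt (α * β) = Real.sqrt α * Real.sqrt β := Real.sqrt_mul hα.le β
  have heigp : ∀ t : ℝ, (t • S).mulVec vp = (t * κ) • vp := by
    intro t
    rw [hS, hκ, hsab]
    funext i
    fin_cases i <;>
      simp [vp, Matrix.mulVec, dotProduct, Fin.sum_univ_two] <;> ring_nf <;>
      first
      | (rw [Real.sq_sqrt hβ.le]; ring)
      | (rw [Real.sq_sqrt hα.le]; ring)
  have heigm : ∀ t : ℝ, (t • S).mulVec vm = (t * (-κ)) • vm := by
    intro t
    rw [hS, hκ, hsab]
    funext i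
    fin_cases i <;>
      simp [vm, Matrix.mulVec, dotProduct, Fin.sum_univ_two] <;> ring_nf <;>
      first
      | (rw [Real.sq_sqrt hβ.le]; ring)
      | (rw [Real.sq_sqrt hα.le]; ring)
  have hzt : ∀ t, z t = (cplus * Real.exp (t * κ)) • vp +
      (cminus * Real.exp (-(t * κ))) • vm := by
    intro t
    rw [hz t, hdecomp, Matrix.mulVec_add, Matrix.mulVec_smul, Matrix.mulVec_smul,
      exp_mulVec_eigen _ _ _ (heigp t), exp_mulVec_eigen _ _ _ (heigm t), mul_neg]
    rw [smul_smul, smul_smul]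
  set w : ℝ → Fin 2 → ℝ := fun t => cplus • vp + (cminus * Real.exp (-(2 * t * κ))) • vm with hw
  have hzw : ∀ t, z t = Real.exp (t * κ) • w t := by
    intro t
    rw [hzt t, hw]
    rw [smul_add, smul_smul, smul_smul]
    congr 2
    · ring
    · rw [mul_comm (Real.exp (t * κ)), mul_assoc, ← Real.exp_add]
      ring_nf
  have hwlim : Tendsto w atTop (nhds (cplus • vp)) := by
    have h1 : Tendsto (fun t : ℝ => -(2 * t * κ)) atTop atBot := by
      apply tendsto_neg_atBot_iff.mpr
      exact (tendsto_id.const_mul_atTop (by norm_num : (0:ℝ) < 2)).atTop_mul_const hκ0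
    have h2 : Tendsto (fun t : ℝ => cminus * Real.exp (-(2 * t * κ))) atTop (nhds 0) := by
      have := (Real.tendsto_exp_atBot.comp h1).const_mul cminus
      simpa using this
    have h3 : Tendsto (fun t : ℝ => (cminus * Real.exp (-(2 * t * κ))) • vm) atTop
        (nhds ((0:ℝ) • vm)) := h2.smul_const vm
    have h4 := (tendsto_const_nhds (x := cplus • vp) (f := atTop)).add h3
    simpa using h4
  have hvpne : vp ≠ 0 := by
    intro hc
    have : vp 0 = 0 := by rw [hc]; rfl
    simp [vp] at this
    exact absurd this (ne_of_gt (Real.sqrt_pos.mpr hβ))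
  have hpos : 0 < ‖cplus • vp‖ := by
    rw [norm_pos_iff]
    exact smul_ne_zero hcplus hvpne
  have hnorm : Tendsto (fun t => ‖w t‖) atTop (nhds ‖cplus • vp‖) := hwlim.norm
  have hlog : Tendsto (fun t => Real.log ‖w t‖) atTop (nhds (Real.log ‖cplus • vp‖)) :=
    hnorm.log (ne_of_gt hpos)
  have htail : Tendsto (fun t => Real.log ‖w t‖ / t) atTop (nhds 0) :=
    hlog.div_atTop tendsto_id
  have hev : ∀ᶠ t : ℝ in atTop, Real.log ‖z t‖ / t = κ + Real.log ‖w t‖ / t := by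
    filter_upwards [hnorm.eventually (eventually_gt_nhds hpos), eventually_gt_atTop (0:ℝ)]
      with t hwt ht
    rw [hzw t, norm_smul, Real.norm_eq_abs, abs_of_pos (Real.exp_pos _),
      Real.log_mul (Real.exp_ne_zero _) (ne_of_gt hwt), Real.log_exp, add_div,
      mul_comm t κ, mul_div_assoc, div_self (ne_of_gt ht), mul_one]
  have : Tendsto (fun t => κ + Real.log ‖w t‖ / t) atTop (nhds (κ + 0)) :=
    tendsto_const_nhds.add htail
  rw [add_zero] at this
  exact Tendsto.congr' (Filter.EventuallyEq.symm hev) this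
end
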